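/- For a prime p of the form p = 6r+5, Σ_{k=1}^{p-1} ⌊−6k/p⌋² = 91r + 54. -/

import Mathlib

open Finset

theorem aux_floor (p k : ℕ) (hp : 0 < p) (hnd : ¬ (p:ℤ) ∣ 6*k) :
    ⌊(-6 * (k : ℚ)) / p⌋ = -(((6*k)/p : ℕ) : ℤ) - 1 := by
  have h1 : (-6 * (k : ℚ)) / p = ((-(6*(k:ℤ)) : ℤ) : ℚ) / ((p:ℕ) : ℚ) := by push_cast; ring
  rw [h1, Rat.floor_intCast_div_natCast]
  have h2 : (((6*k)/p : ℕ) : ℤ) = (6*(k:ℤ)) / p := by push_cast [Int.natCast_ediv]; norm_num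
  rw [h2]
  set a : ℤ := 6*(k:ℤ) with ha
  have hpz : (0:ℤ) < p := by exact_mod_cast hp
  have hd := Int.mul_ediv_add_emod a p
  have hr0 : 0 ≤ a % p := Int.emod_nonneg a (by positivity)
  have hr1 : a % p < p := Int.emod_lt_of_pos a hpz
  have hrne : a % p ≠ 0 := fun h => hnd (Int.dvd_of_emod_eq_zero h)
  have := Int.ediv_emod_unique (a := -a) (b := p) (r := (p:ℤ) - a % p) (q := -(a/p)-1) hpz
  exact (this.mpr ⟨by linarith, by omega, by omega⟩).1

theorem aux_piece (p : ℕ) (a b : ℕ) (j : ℕ)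
    (h : ∀ k, a < k → k ≤ b → (6*k)/p = j) :
    ∑ k ∈ Finset.Ioc a b, ((((6*k)/p : ℕ) : ℤ) + 1)^2 = (b - a : ℕ) * ((j:ℤ)+1)^2 := by
  have hc : ∀ k ∈ Finset.Ioc a b, ((((6*k)/p : ℕ) : ℤ) + 1)^2 = ((j:ℤ)+1)^2 := by
    intro k hk
    simp only [Finset.mem_Ioc] at hk
    rw [h k hk.1 hk.2]
  rw [Finset.sum_congr rfl hc, Finset.sum_const, Nat.card_Ioc, nsmul_eq_mul]

theorem stmt_9 (p r : ℕ) (hp : p.Prime) (hpr : p = 6 * r + 5) :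
    ∑ k ∈ Finset.Icc 1 (p - 1), (⌊(-6 * (k : ℚ)) / p⌋) ^ 2 = 91 * (r : ℤ) + 54 := by
  have hp0 : 0 < p := hp.pos
  have hnd : ∀ k ∈ Finset.Icc 1 (p-1), ¬ (p:ℤ) ∣ 6*(k:ℤ) := by
    intro k hk hdvd
    simp only [Finset.mem_Icc] at hk
    have hdn : p ∣ 6*k := by exact_mod_cast hdvd
    rcases (Nat.Prime.dvd_mul hp).mp hdn with h | h
    · have := Nat.le_of_dvd (by norm_num) h
      have : p = 5 := by omega
      rw [this] at h; omega
    · have := Nat.le_of_dvd (by omega) h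
      omega
  rw [Finset.sum_congr rfl (fun k hk => by
    rw [aux_floor p k hp0 (hnd k hk)])]
  have hstep : ∀ k ∈ Finset.Icc 1 (p-1),
      (-(((6*k)/p : ℕ) : ℤ) - 1)^2 = ((((6*k)/p : ℕ) : ℤ) + 1)^2 := by
    intro k _; ring
  rw [Finset.sum_congr rfl hstep]
  have hIcc : Finset.Icc 1 (p-1) = Finset.Ioc 0 (6*r+4) := by
    rw [hpr, show 6*r+5-1 = 6*r+4 by omega, ← Finset.Icc_add_one_left_eq_Ioc, zero_add]
  rw [hIcc]
  set g : ℕ → ℤ := fun k => ((((6*k)/p : ℕ) : ℤ) + 1)^2 with hg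
  rw [← Finset.sum_Ioc_consecutive g (show (0:ℕ) ≤ r by omega) (show r ≤ 6*r+4 by omega),
      ← Finset.sum_Ioc_consecutive g (show r ≤ 2*r+1 by omega) (show 2*r+1 ≤ 6*r+4 by omega),
      ← Finset.sum_Ioc_consecutive g (show 2*r+1 ≤ 3*r+2 by omega) (show 3*r+2 ≤ 6*r+4 by omega),
      ← Finset.sum_Ioc_consecutive g (show 3*r+2 ≤ 4*r+3 by omega) (show 4*r+3 ≤ 6*r+4 by omega),
      ← Finset.sum_Ioc_consecutive g (show 4*r+3 ≤ 5*r+4 by omega) (show 5*r+4 ≤ 6*r+4 by omega)]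
  have e0 := aux_piece p 0 r 0 (fun k h1 h2 =>
    Nat.div_eq_of_lt_le (by omega) (by omega))
  have e1 := aux_piece p r (2*r+1) 1 (fun k h1 h2 =>
    Nat.div_eq_of_lt_le (by omega) (by omega))
  have e2 := aux_piece p (2*r+1) (3*r+2) 2 (fun k h1 h2 =>
    Nat.div_eq_of_lt_le (by omega) (by omega))
  have e3 := aux_piece p (3*r+2) (4*r+3) 3 (fun k h1 h2 =>
    Nat.div_eq_of_lt_le (by omega) (by omega))
  have e4 := aux_piece p (4*r+3) (5*r+4) 4 (fun k h1 h2 =>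
    Nat.div_eq_of_lt_le (by omega) (by omega))
  have e5 := aux_piece p (5*r+4) (6*r+4) 5 (fun k h1 h2 =>
    Nat.div_eq_of_lt_le (by omega) (by omega))
  simp only [hg]
  rw [e0, e1, e2, e3, e4, e5]
  have c1 : (2*r+1-r : ℕ) = r+1 := by omega
  have c2 : (3*r+2-(2*r+1) : ℕ) = r+1 := by omega
  have c3 : (4*r+3-(3*r+2) : ℕ) = r+1 := by omega
  have c4 : (5*r+4-(4*r+3) : ℕ) = r+1 := by omega
  have c5 : (6*r+4-(5*r+4) : ℕ) = r := by omega
  rw [c1, c2, c3, c4, c5]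
  simp only [Nat.sub_zero]; push_cast; ring
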